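/- arXiv:2205.11295 — 3 statements merged into one kernel-verified Lean document; each statement's English description precedes it below -/
import Mathlib

section
/- There exists no ε ∈ (0, 1/4] satisfying simultaneously t(1/4 − ε²) > t/8, t(3/4 − ε) > 9t/16, and ε + ε² > 1/4, for t > 0. -/
/-- No `ε ∈ (0, 1/4]` simultaneously makes both firms strictly better off and strictly
increases consumer welfare. -/
theorem stmt_10 (t : ℝ) (ht : 0 < t) :
    ¬ ∃ ε ∈ Set.Ioc (0:ℝ) (1/4),
      t*(1/4 - ε^2) > t/8 ∧ t*(3/4 - ε) > 9*t/16 ∧ ε + ε^2 > 1/4 := by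
  rintro ⟨ε, ⟨hε0, hε4⟩, hA, hB, hW⟩
  have hlt : ε < 3/16 := by nlinarith
  nlinarith
end

section
/- Let t > 0 and p_B ≥ 0. Among the three maximizations: max over p ∈ [0, t/3) of p[(1/2 − p/(2t) − 1/6) + (1/2 − (p − p_B)/(2t))], max over p ∈ [t/3, 2t/3) of p[1/6 + (1/2 − (p − p_B)/(2t))], and max over p ∈ [2t/3, ∞) of p[(1/2 − p/(2t)) + (1/2 − (p − p_B)/(2t))], if p_B = 2t/3 then the overall maximum is attained at p = 2t/3. -/
/-- Firm A's uniform-price best response under the firm-optimal mechanism: with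
`p_B = 2t/3`, the overall maximum of the piecewise profit function is attained at
`p = 2t/3`. -/
theorem stmt_18 (t pB : ℝ) (ht : 0 < t) (hpB : pB = 2*t/3) :
    IsMaxOn (fun p : ℝ =>
        if p < t/3 then p * ((1/2 - p/(2*t) - 1/6) + (1/2 - (p - pB)/(2*t)))
        else if p < 2*t/3 then p * (1/6 + (1/2 - (p - pB)/(2*t)))
        else p * ((1/2 - p/(2*t)) + (1/2 - (p - pB)/(2*t))))
      (Set.Ici (0:ℝ)) (2*t/3) := by
  subst hpB
  rw [isMaxOn_iff]
  intro p hp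
  simp only [Set.mem_Ici] at hp
  have h1 : ¬ (2*t/3 < t/3) := by linarith
  have h2 : ¬ (2*t/3 < 2*t/3) := lt_irrefl _
  simp only [h1, h2, if_false]
  have h2t : (0:ℝ) < 2*t := by linarith
  split_ifs with hA hB
  · rw [← sub_nonneg]
    have : 2*t/3 * ((1/2 - (2*t/3)/(2*t)) + (1/2 - (2*t/3 - 2*t/3)/(2*t)))
        - p * ((1/2 - p/(2*t) - 1/6) + (1/2 - (p - 2*t/3)/(2*t)))
        = ((t/3 - p)*(4*t/3 - p) + p*t/2)/t := by field_simp; ring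
    rw [this]
    apply div_nonneg _ (le_of_lt ht)
    nlinarith
  · have key : p * (1/6 + (1/2 - (p - 2*t/3)/(2*t))) ≤ 4*t/9 := by
      rw [← sub_nonneg]
      have : 4*t/9 - p * (1/6 + (1/2 - (p - 2*t/3)/(2*t)))
          = (2*t/3 - p) * (4*t/3 - p) / (2*t) := by field_simp; ring
      rw [this]
      apply div_nonneg _ (le_of_lt h2t)
      nlinarith
    calc _ ≤ 4*t/9 := key
      _ = 2*t/3 * ((1/2 - (2*t/3)/(2*t)) + (1/2 - (2*t/3 - 2*t/3)/(2*t))) := by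
          field_simp; ring
  · rw [← sub_nonneg]
    have : 2*t/3 * ((1/2 - (2*t/3)/(2*t)) + (1/2 - (2*t/3 - 2*t/3)/(2*t)))
        - p * ((1/2 - p/(2*t)) + (1/2 - (p - 2*t/3)/(2*t)))
        = (p - 2*t/3)^2 / t := by field_simp; ring
    rw [this]
    positivity
end

section
/- Suppose consumers are uniform within each segment with segment probabilities q_B, q_A, q_∅, q_{AB} summing to 1, with q_A, q_B > 0. Let p_A = t(2q_Bq_A + 2q_Bq_∅ + 3q_Aq_∅ + 3q_∅²)/(4q_Bq_A + 4q_Bq_∅ + 4q_Aq_∅ + 3q_∅²) and p_B defined symmetrically (swapping q_A and q_B). Then 3q_B·p_A² ≥ q_A·p_B² holds for every q_∅ ≥ 0 if and only if 3q_B ≥ q_A. -/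
/-- In the general four-segment model with uniform within-segment distributions and
segment probabilities summing to 1, the IR inequality `3 q_B p_A² ≥ q_A p_B²` holds for
every `q_∅ ≥ 0` iff `3 q_B ≥ q_A`. -/
theorem stmt_19 (t qA qB : ℝ) (ht : 0 < t) (hqA : 0 < qA) (hqB : 0 < qB)
    (hsum : qA + qB ≤ 1) :
    (∀ qe qAB : ℝ, 0 ≤ qe → 0 ≤ qAB → qB + qA + qe + qAB = 1 →
        3 * qB * (t*(2*qB*qA + 2*qB*qe + 3*qA*qe + 3*qe^2) /
            (4*qB*qA + 4*qB*qe + 4*qA*qe + 3*qe^2))^2 ≥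
          qA * (t*(2*qB*qA + 2*qA*qe + 3*qB*qe + 3*qe^2) /
            (4*qB*qA + 4*qB*qe + 4*qA*qe + 3*qe^2))^2) ↔
      3*qB ≥ qA := by
  constructor
  · intro h
    have h0 := h 0 (1 - qB - qA) le_rfl (by linarith) (by ring)
    have hD : (4*qB*qA + 4*qB*0 + 4*qA*0 + 3*(0:ℝ)^2) = 4*qB*qA := by ring
    have hAB : (0:ℝ) < 4*qB*qA := by positivity
    have hp : t*(2*qB*qA + 2*qB*0 + 3*qA*0 + 3*(0:ℝ)^2) /
        (4*qB*qA + 4*qB*0 + 4*qA*0 + 3*(0:ℝ)^2) = t/2 := by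
      field_simp
      ring
    have hp' : t*(2*qB*qA + 2*qA*0 + 3*qB*0 + 3*(0:ℝ)^2) /
        (4*qB*qA + 4*qB*0 + 4*qA*0 + 3*(0:ℝ)^2) = t/2 := by
      field_simp
      ring
    rw [hp, hp'] at h0
    have ht2 : (0:ℝ) < (t/2)^2 := by positivity
    nlinarith [h0, ht2]
  · intro h qe qAB hqe hqAB hs
    have hD : (0:ℝ) < 4*qB*qA + 4*qB*qe + 4*qA*qe + 3*qe^2 := by positivity
    rw [ge_iff_le, div_pow, div_pow, ← mul_div_assoc, ← mul_div_assoc,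
      div_le_div_iff₀ (by positivity) (by positivity)]
    have key : qA * (2*qB*qA + 2*qA*qe + 3*qB*qe + 3*qe^2)^2 ≤
        3 * qB * (2*qB*qA + 2*qB*qe + 3*qA*qe + 3*qe^2)^2 := by
      have c1 : (0:ℝ) ≤ 3*qB^2 + 3*qA*qB - qA^2 := by nlinarith [mul_pos hqA hqB]
      have c2 : (0:ℝ) ≤ 12*qB^3 + 63*qA*qB^2 + 3*qA^2*qB - 4*qA^3 := by
        nlinarith [mul_pos hqA hqB, mul_pos (mul_pos hqA hqA) hqB,
          mul_pos (mul_pos hqA hqB) hqB]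
      have c0 : (0:ℝ) ≤ 3*qB - qA := by linarith
      have e2 : (0:ℝ) ≤ qe^2 := sq_nonneg qe
      have e3 : (0:ℝ) ≤ qe^3 := by positivity
      have e4 : (0:ℝ) ≤ qe^4 := by positivity
      nlinarith [mul_nonneg (by positivity : (0:ℝ) ≤ 4*qA^2*qB^2) c0,
        mul_nonneg (mul_nonneg (by positivity : (0:ℝ) ≤ 8*qA*qB) c1) hqe,
        mul_nonneg c2 e2, mul_nonneg (mul_nonneg (by norm_num : (0:ℝ) ≤ 12) c1) e3,
        mul_nonneg (mul_nonneg (by norm_num : (0:ℝ) ≤ 9) c0) e4]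
    have h2 := mul_le_mul_of_nonneg_right key
      (show (0:ℝ) ≤ t^2 * (4*qB*qA + 4*qB*qe + 4*qA*qe + 3*qe^2)^2 by positivity)
    nlinarith [h2]
end
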